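/- Let c = (c_1,…,c_k) be a composition and let m be a positive integer; write mc = (mc_1,…,mc_k). Then for every real q, g_{mc}(q) = (1/m^k) · g_c(q^m). -/

import Mathlib

open MeasureTheory

/-- Iterated integral defining the composition polynomial, peeling off the
outermost variable first (so the list argument is the reversed composition). -/
noncomputable def gAux : List ℕ → ℝ → ℝ → ℝ
  | [], _, _ => 1
  | a :: rest, q, u => ∫ t in q..u, t ^ (a - 1) * gAux rest q t

/-- The composition polynomial
`g_c(q) = ∫_q^1 ∫_q^{t_k} ⋯ ∫_q^{t_2} t_1^{c_1-1} ⋯ t_k^{c_k-1} dt_1 ⋯ dt_k`. -/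
noncomputable def gcomp (c : List ℕ) (q : ℝ) : ℝ := gAux c.reverse q 1

lemma gAux_continuous (l : List ℕ) (q : ℝ) : Continuous (gAux l q) := by
  induction l with
  | nil => simpa [gAux] using continuous_const
  | cons a rest ih =>
    have hcont : Continuous fun t : ℝ => t ^ (a - 1) * gAux rest q t :=
      (continuous_pow _).mul ih
    have : Continuous fun u : ℝ => ∫ t in q..u, t ^ (a - 1) * gAux rest q t :=
      intervalIntegral.continuous_primitive
        (fun c d => hcont.intervalIntegrable c d) q
    simpa [gAux] using this

lemma gAux_dilation (m : ℕ) (hm : 0 < m) (l : List ℕ) (hpos : ∀ a ∈ l, 0 < a)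
    (q u : ℝ) :
    gAux (l.map fun a => m * a) q u
      = ((m : ℝ)⁻¹) ^ l.length * gAux l (q ^ m) (u ^ m) := by
  induction l generalizing u with
  | nil => simp [gAux]
  | cons a rest ih =>
    have ha : 0 < a := hpos a List.mem_cons_self
    have hrest : ∀ b ∈ rest, 0 < b := fun b hb => hpos b (List.mem_cons_of_mem a hb)
    have hG : Continuous (gAux rest (q ^ m)) := gAux_continuous rest (q ^ m)
    have hg : Continuous fun s : ℝ => s ^ (a - 1) * gAux rest (q ^ m) s :=
      (continuous_pow _).mul hG
    have hderiv : ∀ x ∈ Set.uIcc q u, HasDerivAt (fun t : ℝ => t ^ m)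
        ((m : ℝ) * x ^ (m - 1)) x := by
      intro x _
      simpa using hasDerivAt_pow m x
    have hsubst :
        (∫ t in q..u, ((m : ℝ) * t ^ (m - 1)) •
            ((fun s => s ^ (a - 1) * gAux rest (q ^ m) s) ∘ fun t => t ^ m) t)
          = ∫ s in (q ^ m)..(u ^ m), s ^ (a - 1) * gAux rest (q ^ m) s :=
      intervalIntegral.integral_comp_smul_deriv hderiv
        (by fun_prop) hg
    have hexp : ∀ t : ℝ, t ^ (m - 1) * (t ^ m) ^ (a - 1) = t ^ (m * a - 1) := by
      intro t
      rw [← pow_mul, ← pow_add]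
      congr 1
      have h2 : m * (a - 1) = m * a - m := by rw [Nat.mul_sub, mul_one]
      have h3 : m ≤ m * a := Nat.le_mul_of_pos_right m ha
      omega
    rw [List.map_cons]
    simp only [gAux]
    simp only [ih hrest]
    have hL : (∫ t in q..u, t ^ (m * a - 1) *
          ((m : ℝ)⁻¹ ^ rest.length * gAux rest (q ^ m) (t ^ m)))
        = (m : ℝ)⁻¹ ^ rest.length * (m : ℝ)⁻¹ *
          ∫ t in q..u, ((m : ℝ) * t ^ (m - 1)) •
            ((fun s => s ^ (a - 1) * gAux rest (q ^ m) s) ∘ fun t => t ^ m) t := by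
      rw [← intervalIntegral.integral_const_mul]
      apply intervalIntegral.integral_congr
      intro t _
      have hm' : (m : ℝ) ≠ 0 := Nat.cast_ne_zero.mpr hm.ne'
      simp only [Function.comp, smul_eq_mul]
      rw [← hexp t]
      field_simp
    rw [hL, hsubst]
    simp [List.length_map, pow_succ]

/-- Theorem: for a positive integer `m` and the composition `mc = (mc_1, …, mc_k)`,
`g_{mc}(q) = (1/m^k) · g_c(q^m)` for every real `q`. -/
theorem composition_polynomial_dilation (c : List ℕ) (hpos : ∀ a ∈ c, 0 < a)
    (m : ℕ) (hm : 0 < m) (q : ℝ) :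
    gcomp (c.map fun a => m * a) q = (1 / (m : ℝ) ^ c.length) * gcomp c (q ^ m) := by
  have h := gAux_dilation m hm c.reverse (by simpa using hpos) q 1
  unfold gcomp
  rw [show (c.map fun a => m * a).reverse = c.reverse.map (fun a => m * a) from
    List.map_reverse.symm, h]
  simp [one_div, inv_pow]
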